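/- (From weighted-mass convergence to free-boundary asymptotics) Suppose s : (0,∞) → ℝ with s(t) → ∞, M_ψ : (0,∞) → ℝ, constants C₁, A, L, d, t₀ > 0, and: (i) M_ψ(t) ≥ C₁A(t−t₀) + ½(s(t₀)+d+L)² − ½(s(t)+d+L)² + M_ψ(t₀) for t ≥ t₀; (ii) M_ψ(t) ≤ C₁At − ½(s(t)−L)² + ½L². If F(t) := M_ψ(t)/t → F_∞ as t → ∞, then s(t)/√t → (2C₁A − 2F_∞)^{1/2}. -/

import Mathlib

open MeasureTheory Real Set

lemma sqrt_tendsto_atTop' : Filter.Tendsto Real.sqrt Filter.atTop Filter.atTop := by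
  apply Filter.tendsto_atTop_atTop.2
  intro b
  refine ⟨max 0 b ^ 2, fun a ha => ?_⟩
  have h0 : (0:ℝ) ≤ max 0 b := le_max_left _ _
  calc b ≤ max 0 b := le_max_right _ _
    _ = Real.sqrt ((max 0 b) ^ 2) := (Real.sqrt_sq h0).symm
    _ ≤ Real.sqrt a := Real.sqrt_le_sqrt ha

theorem stmt_16 (s Mψ : ℝ → ℝ) (C1 A L d t0 Finf : ℝ)
    (hC1 : 0 < C1) (hA : 0 < A) (hL : 0 ≤ L) (hd : 0 ≤ d) (ht0 : 0 < t0)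
    (hs : Filter.Tendsto s Filter.atTop Filter.atTop)
    (h1 : ∀ t, t0 ≤ t →
      C1 * A * (t - t0) + (s t0 + d + L) ^ 2 / 2 - (s t + d + L) ^ 2 / 2 + Mψ t0
        ≤ Mψ t)
    (h2 : ∀ t, 0 < t → Mψ t ≤ C1 * A * t - (s t - L) ^ 2 / 2 + L ^ 2 / 2)
    (hF : Filter.Tendsto (fun t => Mψ t / t) Filter.atTop (nhds Finf))
    (hnn : 0 ≤ 2 * C1 * A - 2 * Finf) :
    Filter.Tendsto (fun t => s t / Real.sqrt t) Filter.atTop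
      (nhds (Real.sqrt (2 * C1 * A - 2 * Finf))) := by
  set c : ℝ := 2 * C1 * A - 2 * Finf with hc
  set K : ℝ := 2 * Mψ t0 - 2 * C1 * A * t0 + (s t0 + d + L) ^ 2 with hK
  set a : ℝ → ℝ := fun t => 2 * C1 * A - 2 * (Mψ t / t) + K / t with haf
  set b : ℝ → ℝ := fun t => 2 * C1 * A - 2 * (Mψ t / t) + L ^ 2 / t with hbf
  have hKtend : Filter.Tendsto (fun t : ℝ => K / t) Filter.atTop (nhds 0) :=
    Filter.Tendsto.div_atTop tendsto_const_nhds Filter.tendsto_id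
  have hLtend : Filter.Tendsto (fun t : ℝ => L ^ 2 / t) Filter.atTop (nhds 0) :=
    Filter.Tendsto.div_atTop tendsto_const_nhds Filter.tendsto_id
  have h0 : Filter.Tendsto (fun t => 2 * C1 * A - 2 * (Mψ t / t)) Filter.atTop
      (nhds (2 * C1 * A - 2 * Finf)) := (hF.const_mul 2).const_sub (2 * C1 * A)
  have ha : Filter.Tendsto a Filter.atTop (nhds c) := by
    have := h0.add hKtend
    simpa [haf, hc] using this
  have hb : Filter.Tendsto b Filter.atTop (nhds c) := by
    have := h0.add hLtend
    simpa [hbf, hc] using this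
  -- the shifted function v
  set v : ℝ → ℝ := fun t => (s t - L) / Real.sqrt t with hv
  have hsqrt0 : Filter.Tendsto (fun t : ℝ => (d + 2 * L) / Real.sqrt t)
      Filter.atTop (nhds 0) :=
    Filter.Tendsto.div_atTop tendsto_const_nhds sqrt_tendsto_atTop'
  have hlow : Filter.Tendsto (fun t => Real.sqrt (a t) - (d + 2 * L) / Real.sqrt t)
      Filter.atTop (nhds (Real.sqrt c)) := by
    have := ((Real.continuous_sqrt.tendsto c).comp ha).sub hsqrt0
    simpa using this
  have hup : Filter.Tendsto (fun t => Real.sqrt (b t)) Filter.atTop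
      (nhds (Real.sqrt c)) := (Real.continuous_sqrt.tendsto c).comp hb
  have hev : ∀ᶠ t in Filter.atTop,
      Real.sqrt (a t) - (d + 2 * L) / Real.sqrt t ≤ v t ∧ v t ≤ Real.sqrt (b t) := by
    filter_upwards [Filter.eventually_ge_atTop t0, Filter.eventually_ge_atTop 1,
      hs.eventually_ge_atTop L] with t ht1 ht2 ht3
    have htpos : (0:ℝ) < t := lt_of_lt_of_le one_pos ht2
    have hst : (0:ℝ) < Real.sqrt t := Real.sqrt_pos.2 htpos
    have hsq : Real.sqrt t ^ 2 = t := Real.sq_sqrt htpos.le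
    constructor
    · -- lower bound
      have key : a t ≤ ((s t + d + L) / Real.sqrt t) ^ 2 := by
        have h1' := h1 t ht1
        have hineq : a t * t ≤ (s t + d + L) ^ 2 := by
          have hat : a t * t = 2 * C1 * A * t - 2 * Mψ t + K := by
            simp only [haf]
            field_simp
          rw [hat, hK]
          nlinarith [h1 t ht1]
        rw [div_pow, hsq, le_div_iff₀ htpos]
        exact hineq
      have h1le : Real.sqrt (a t) ≤ (s t + d + L) / Real.sqrt t := by
        have hnn2 : 0 ≤ (s t + d + L) / Real.sqrt t := by
          apply div_nonneg _ hst.le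
          linarith
        calc Real.sqrt (a t) ≤ Real.sqrt (((s t + d + L) / Real.sqrt t) ^ 2) :=
              Real.sqrt_le_sqrt key
          _ = (s t + d + L) / Real.sqrt t := Real.sqrt_sq hnn2
      have : (s t + d + L) / Real.sqrt t - (d + 2 * L) / Real.sqrt t = v t := by
        rw [hv, div_sub_div_same]
        ring_nf
      linarith [sub_le_sub_right h1le ((d + 2 * L) / Real.sqrt t), this.le, this.ge]
    · -- upper bound
      have hvnn : 0 ≤ v t := div_nonneg (by linarith) hst.le
      have key : v t ^ 2 ≤ b t := by
        have hineq : (s t - L) ^ 2 ≤ b t * t := by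
          have hbt : b t * t = 2 * C1 * A * t - 2 * Mψ t + L ^ 2 := by
            simp only [hbf]
            field_simp
          rw [hbt]
          nlinarith [h2 t htpos]
        rw [hv, div_pow, hsq, div_le_iff₀ htpos]
        exact hineq
      calc v t = Real.sqrt (v t ^ 2) := (Real.sqrt_sq hvnn).symm
        _ ≤ Real.sqrt (b t) := Real.sqrt_le_sqrt key
  have hvtend : Filter.Tendsto v Filter.atTop (nhds (Real.sqrt c)) := by
    refine tendsto_of_tendsto_of_tendsto_of_le_of_le' hlow hup ?_ ?_
    · exact hev.mono fun t h => h.1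
    · exact hev.mono fun t h => h.2
  have hL0 : Filter.Tendsto (fun t : ℝ => L / Real.sqrt t) Filter.atTop (nhds 0) :=
    Filter.Tendsto.div_atTop tendsto_const_nhds sqrt_tendsto_atTop'
  have := hvtend.add hL0
  rw [add_zero] at this
  refine this.congr fun t => ?_
  rw [hv]
  rw [← add_div]
  ring_nf
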